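/- Let p ≥ 2 be an integer and λ > 0 a real number. Let T : ℝ → ℝ be such that for every real z ≤ 0 one has T(z) > 0 and z·T(z)^p − T(z) + 1 = 0. Define k : ℝ → ℝ by k(v) = v·√(1 + λ·v^(2p−2)) and h : ℝ → ℝ by h(u) = u·√(T(−λ·u^(2p−2))). Then for every real s, k(h(s)) = s and h(k(s)) = s; that is, h and k are mutually inverse bijections of ℝ. -/

import Mathlib

private lemma fc_unique (p : ℕ) (w : ℝ) (hw : w ≤ 0)
    {t1 t2 : ℝ} (h1 : 0 < t1) (h2 : 0 < t2)
    (e1 : w * t1 ^ p - t1 + 1 = 0) (e2 : w * t2 ^ p - t2 + 1 = 0) : t1 = t2 := by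
  rcases lt_trichotomy t1 t2 with hlt | heq | hgt
  · have hpow : t1 ^ p ≤ t2 ^ p := pow_le_pow_left₀ h1.le hlt.le p
    have := mul_le_mul_of_nonpos_left hpow hw
    linarith
  · exact heq
  · have hpow : t2 ^ p ≤ t1 ^ p := pow_le_pow_left₀ h2.le hgt.le p
    have := mul_le_mul_of_nonpos_left hpow hw
    linarith

/-- The scalar functions `k_λ(v) = v·√(1+λv^(2p−2))` and `h_λ(u) = u·√(T(−λu^(2p−2)))`
(with `T` the positive Fuss–Catalan function) are mutually inverse bijections of `ℝ`. -/
theorem h_and_k_mutually_inverse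
    (p : ℕ) (hp : 2 ≤ p) (lam : ℝ) (hlam : 0 < lam)
    (T : ℝ → ℝ)
    (hTpos : ∀ z : ℝ, z ≤ 0 → 0 < T z)
    (hTeq : ∀ z : ℝ, z ≤ 0 → z * (T z) ^ p - T z + 1 = 0)
    (k h : ℝ → ℝ)
    (hk : ∀ v : ℝ, k v = v * Real.sqrt (1 + lam * v ^ (2 * p - 2)))
    (hh : ∀ u : ℝ, h u = u * Real.sqrt (T (-lam * u ^ (2 * p - 2)))) :
    (∀ s : ℝ, k (h s) = s ∧ h (k s) = s) ∧
      Function.Bijective h ∧ Function.Bijective k := by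
  have he : 2 * p - 2 = 2 * (p - 1) := by omega
  have hsq : ∀ x : ℝ, 0 ≤ x ^ (2 * p - 2) := by
    intro x
    rw [he, pow_mul]
    positivity
  have hpow2 : ∀ x : ℝ, 0 ≤ x → (Real.sqrt x) ^ (2 * p - 2) = x ^ (p - 1) := by
    intro x hx
    rw [he, pow_mul, Real.sq_sqrt hx]
  have main : ∀ s : ℝ, k (h s) = s ∧ h (k s) = s := by
    intro s
    constructor
    · -- k (h s) = s
      set z := -lam * s ^ (2 * p - 2) with hz
      have hz0 : z ≤ 0 := by
        have := hsq s
        nlinarith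
      have hT := hTpos z hz0
      have heq := hTeq z hz0
      rw [hh s, hk]
      have hhe : (s * Real.sqrt (T z)) ^ (2 * p - 2)
          = s ^ (2 * p - 2) * (T z) ^ (p - 1) := by
        rw [mul_pow, hpow2 _ hT.le]
      rw [hhe]
      have hpp : (T z) ^ p = (T z) ^ (p - 1) * T z := by
        rw [← pow_succ]
        congr 1
        omega
      have hz' : lam * s ^ (2 * p - 2) = -z := by rw [hz]; ring
      have key : 1 + lam * (s ^ (2 * p - 2) * (T z) ^ (p - 1)) = 1 / T z := by
        rw [← mul_assoc, hz']
        rw [hpp] at heq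
        field_simp
        nlinarith [heq]
      rw [key, mul_assoc, ← Real.sqrt_mul hT.le, mul_one_div, div_self hT.ne',
        Real.sqrt_one, mul_one]
    · -- h (k s) = s
      set a := 1 + lam * s ^ (2 * p - 2) with ha
      have ha0 : 0 < a := by nlinarith [hsq s]
      rw [hk s, hh]
      have hke : (s * Real.sqrt a) ^ (2 * p - 2)
          = s ^ (2 * p - 2) * a ^ (p - 1) := by
        rw [mul_pow, hpow2 _ ha0.le]
      rw [hke]
      set w := -lam * (s ^ (2 * p - 2) * a ^ (p - 1)) with hw
      have hw0 : w ≤ 0 := by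
        have h1 := hsq s
        have h2 : 0 ≤ a ^ (p - 1) := pow_nonneg ha0.le _
        have h3 := mul_nonneg h1 h2
        nlinarith
      have hT := hTpos w hw0
      have heqT := hTeq w hw0
      have hap : a ^ p = a ^ (p - 1) * a := by
        rw [← pow_succ]; congr 1; omega
      have hsol : w * (1 / a) ^ p - (1 / a) + 1 = 0 := by
        rw [hw]
        field_simp
        have hQ : a ^ (p - 1) * a * (1 / a) ^ p = 1 := by
          rw [← hap, ← mul_pow, mul_one_div_cancel ha0.ne', one_pow]
        linear_combination (-(lam * s ^ (2 * p - 2))) * hQ + ha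
      have hTw : T w = 1 / a :=
        fc_unique p w hw0 hT (by positivity) heqT hsol
      rw [hTw, mul_assoc, ← Real.sqrt_mul ha0.le, mul_one_div, div_self ha0.ne',
        Real.sqrt_one, mul_one]
  refine ⟨main, ?_, ?_⟩
  · exact Function.bijective_iff_has_inverse.mpr
      ⟨k, fun s => (main s).1, fun s => (main s).2⟩
  · exact Function.bijective_iff_has_inverse.mpr
      ⟨h, fun s => (main s).2, fun s => (main s).1⟩
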